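/- Let a_n = 7^n + (191/3)·n·7^{n−2} − (16/3)·n for n ≥ 3. Then (1/2)·a_n^{1/(4n)} → (1/2)·7^{1/4} as n → ∞. -/

import Mathlib

open Filter

lemma pow_rpow_eq (n : ℕ) (hn : 1 ≤ n) :
    ((7 : ℝ) ^ n) ^ ((1 : ℝ) / (4 * n)) = (7 : ℝ) ^ ((1 : ℝ) / 4) := by
  have hn' : (n : ℝ) ≠ 0 := Nat.cast_ne_zero.mpr (by omega)
  rw [← Real.rpow_natCast 7 n, ← Real.rpow_mul (by norm_num)]
  congr 1
  field_simp

lemma aux_tendsto : Tendsto (fun n : ℕ => ((65 : ℝ) * n) ^ ((1 : ℝ) / (4 * n)))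
    atTop (nhds 1) := by
  have h := (tendsto_rpow_div_mul_add 1 (4 / 65) 0 (by norm_num)).comp
    (tendsto_natCast_atTop_atTop.const_mul_atTop (by norm_num : (0:ℝ) < 65))
  refine h.congr fun n => ?_
  simp only [Function.comp_apply]
  congr 1
  ring

/-- Let `a_n = 7^n + (191/3)·n·7^(n−2) − (16/3)·n` (the number of connected sets of the
criss-cross prism `Π_n^×`, a cubic graph on `4n` vertices). Then
`(1/2)·a_n^(1/(4n)) → (1/2)·7^(1/4)` as `n → ∞`. -/
theorem crisscross_c_limit :
    Tendsto
      (fun n : ℕ =>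
        (1 / 2 : ℝ) *
          ((7 : ℝ) ^ n + 191 / 3 * n * 7 ^ (n - 2) - 16 / 3 * n) ^ ((1 : ℝ) / (4 * n)))
      atTop (nhds ((1 / 2 : ℝ) * (7 : ℝ) ^ ((1 : ℝ) / 4))) := by
  have key : Tendsto
      (fun n : ℕ =>
        ((7 : ℝ) ^ n + 191 / 3 * n * 7 ^ (n - 2) - 16 / 3 * n) ^ ((1 : ℝ) / (4 * n)))
      atTop (nhds ((7 : ℝ) ^ ((1 : ℝ) / 4))) := by
    apply tendsto_of_tendsto_of_tendsto_of_le_of_le'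
      (g := fun _ : ℕ => (7 : ℝ) ^ ((1 : ℝ) / 4))
      (h := fun n : ℕ => ((65 : ℝ) * n) ^ ((1 : ℝ) / (4 * n)) * (7 : ℝ) ^ ((1 : ℝ) / 4))
    · exact tendsto_const_nhds
    · simpa using aux_tendsto.mul_const ((7 : ℝ) ^ ((1 : ℝ) / 4))
    · filter_upwards [eventually_ge_atTop 1] with n hn
      have hlow : (7 : ℝ) ^ n ≤ (7 : ℝ) ^ n + 191 / 3 * n * 7 ^ (n - 2) - 16 / 3 * n := by
        have h1 : (1 : ℝ) ≤ 7 ^ (n - 2) := one_le_pow₀ (by norm_num : (1:ℝ) ≤ 7)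
        have h2 : (0 : ℝ) ≤ n := Nat.cast_nonneg n
        nlinarith
      have he : (0 : ℝ) ≤ (1 : ℝ) / (4 * n) := by positivity
      calc (7 : ℝ) ^ ((1 : ℝ) / 4) = ((7 : ℝ) ^ n) ^ ((1 : ℝ) / (4 * n)) :=
            (pow_rpow_eq n hn).symm
        _ ≤ _ := Real.rpow_le_rpow (by positivity) hlow he
    · filter_upwards [eventually_ge_atTop 1] with n hn
      have hup : (7 : ℝ) ^ n + 191 / 3 * n * 7 ^ (n - 2) - 16 / 3 * n
          ≤ 65 * n * 7 ^ n := by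
        have h1 : (7 : ℝ) ^ (n - 2) ≤ 7 ^ n :=
          pow_le_pow_right₀ (by norm_num) (Nat.sub_le n 2)
        have h2 : (1 : ℝ) ≤ n := by exact_mod_cast hn
        have h3 : (0 : ℝ) < 7 ^ n := by positivity
        nlinarith
      have he : (0 : ℝ) ≤ (1 : ℝ) / (4 * n) := by positivity
      have hpos : (0 : ℝ) ≤ (7 : ℝ) ^ n + 191 / 3 * n * 7 ^ (n - 2) - 16 / 3 * n := by
        have h1 : (1 : ℝ) ≤ 7 ^ (n - 2) := one_le_pow₀ (by norm_num : (1:ℝ) ≤ 7)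
        have h2 : (0 : ℝ) ≤ n := Nat.cast_nonneg n
        have h3 : (0 : ℝ) < 7 ^ n := by positivity
        nlinarith
      calc ((7 : ℝ) ^ n + 191 / 3 * n * 7 ^ (n - 2) - 16 / 3 * n) ^ ((1 : ℝ) / (4 * n))
          ≤ ((65 : ℝ) * n * 7 ^ n) ^ ((1 : ℝ) / (4 * n)) :=
            Real.rpow_le_rpow hpos hup he
        _ = ((65 : ℝ) * n) ^ ((1 : ℝ) / (4 * n)) * ((7 : ℝ) ^ n) ^ ((1 : ℝ) / (4 * n)) :=
            Real.mul_rpow (by positivity) (by positivity)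
        _ = _ := by rw [pow_rpow_eq n hn]
  simpa using key.const_mul (1 / 2 : ℝ)
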